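/- arXiv:math/0606123 — 4 statements merged into one kernel-verified Lean document; each statement's English description precedes it below -/
import Mathlib

section
/- Let 1 ≤ k ≤ n and regard S_k as the subgroup {w ∈ S_n : w(x) = x for all x > k} of S_n. Let g ∈ S_n and let w_0 ∈ S_k be any element attaining the maximum of the function w ↦ ν(wg) on S_k (i.e. ν(w_0 g) ≥ ν(w g) for all w ∈ S_k). Then the identity ∑_{w ∈ S_k} α^{n−ν(wg)} = α^{n−ν(w_0 g)} · (1+α)(1+2α)⋯(1+(k−1)α) holds in the polynomial ring ℤ[α]. -/
/-- The number of cycles `ν(w)` of a permutation `w` of `{1,…,n}`: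
the number of orbits of `w` acting on `Fin n` (fixed points count as cycles of length 1). -/
noncomputable def permCycles {n : ℕ} (w : Equiv.Perm (Fin n)) : ℕ :=
  Nat.card (MulAction.orbitRel.Quotient (Subgroup.zpowers w) (Fin n))

/-- Membership in the subgroup `S_k = {w ∈ S_n : w(x) = x for all x > k}` of `S_n`
(with `Fin n` indexed from `0`, i.e. `w x = x` whenever `k ≤ x`). -/
def inSymSub (n k : ℕ) (w : Equiv.Perm (Fin n)) : Prop :=
  ∀ x : Fin n, k ≤ (x : ℕ) → w x = x

instance (n k : ℕ) : DecidablePred (inSymSub n k) := by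
  unfold inSymSub; infer_instance

open Equiv Equiv.Perm MulAction Finset Polynomial

variable {n : ℕ} {σ τ u h : Equiv.Perm (Fin n)} {i j x y : Fin n}

lemma orbit_iff_sameCycle : x ∈ MulAction.orbit (Subgroup.zpowers σ) y ↔ σ.SameCycle y x := by
  constructor
  · rintro ⟨⟨g, hg⟩, rfl⟩
    obtain ⟨q, rfl⟩ := Subgroup.mem_zpowers_iff.mp hg
    exact ⟨q, rfl⟩
  · rintro ⟨q, rfl⟩
    exact ⟨⟨σ ^ q, Subgroup.mem_zpowers_iff.mpr ⟨q, rfl⟩⟩, rfl⟩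

abbrev pcQ {n : ℕ} (σ : Equiv.Perm (Fin n)) :=
  MulAction.orbitRel.Quotient (Subgroup.zpowers σ) (Fin n)

lemma pcQ_mk_eq : (Quotient.mk'' x : pcQ σ) = Quotient.mk'' y ↔ σ.SameCycle y x := by
  rw [Quotient.eq'']
  exact (MulAction.orbitRel_apply).trans orbit_iff_sameCycle

lemma zpow_eq_pow_of_fix {m : ℕ} (hm : 0 < m) (hfix : (σ ^ m) x = x) (q : ℤ) :
    ∃ r : ℕ, r < m ∧ (σ ^ q) x = (σ ^ r) x := by
  have hm' : (0:ℤ) < (m:ℤ) := by exact_mod_cast hm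
  refine ⟨(q % m).toNat, ?_, ?_⟩
  · have := Int.emod_lt_of_pos q hm'
    have := Int.emod_nonneg q hm'.ne'
    omega
  · have hq : q = q % m + m * (q / m) := by
      have := Int.emod_add_mul_ediv q m
      linarith
    have h1 : (σ ^ ((m : ℤ) * (q / m))) x = x := by
      rw [zpow_mul, zpow_natCast]
      exact Function.IsFixedPt.perm_zpow hfix (q / m)
    calc (σ ^ q) x = (σ ^ (q % m) * σ ^ ((m:ℤ) * (q / m))) x := by
          rw [← zpow_add, ← hq]
      _ = (σ ^ (q % m)) x := by rw [mul_apply, h1]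
      _ = (σ ^ (q % m).toNat) x := by
          rw [← zpow_natCast σ (q % m).toNat,
            Int.toNat_of_nonneg (Int.emod_nonneg q hm'.ne')]

lemma not_sameCycle_of_fix {m : ℕ} (hm : 0 < m) (hfix : (σ ^ m) x = x)
    (hall : ∀ r < m, (σ ^ r) x ≠ y) : ¬ σ.SameCycle x y := by
  rintro ⟨q, hq⟩
  obtain ⟨r, hr, hr'⟩ := zpow_eq_pow_of_fix hm hfix q
  exact hall r hr (hr' ▸ hq)

lemma walk_pow {m : ℕ} (hmid : ∀ s, 1 ≤ s → s < m → (σ ^ s) x ≠ i ∧ (σ ^ s) x ≠ j) :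
    ∀ t, 1 ≤ t → t ≤ m → ((Equiv.swap i j * σ) ^ t) x = Equiv.swap i j ((σ ^ t) x) := by
  intro t
  induction t with
  | zero => omega
  | succ t ih =>
    intro _ htm
    rcases Nat.eq_zero_or_pos t with rfl | ht
    · simp [mul_apply]
    · have h1 : ((Equiv.swap i j * σ) ^ (t+1)) x
          = (Equiv.swap i j * σ) (((Equiv.swap i j * σ) ^ t) x) := by
        rw [pow_succ', mul_apply]
      rw [h1, ih ht (le_of_lt htm), mul_apply]
      have hmi := hmid t ht (by omega)
      rw [Equiv.swap_apply_of_ne_of_ne hmi.1 hmi.2]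
      rw [pow_succ', mul_apply]

lemma sameCycle_one_step : (σ).SameCycle a (σ a) := ⟨1, by rw [zpow_one]⟩

lemma sameCycle_swap_mul_self (hij : i ≠ j) (hns : ¬ σ.SameCycle i j) :
    (Equiv.swap i j * σ).SameCycle j i := by
  have hex : ∃ t, 0 < t ∧ (σ ^ t) j = j :=
    ⟨orderOf σ, orderOf_pos σ, by rw [pow_orderOf_eq_one]; rfl⟩
  set m := Nat.find hex with hmdef
  obtain ⟨hm0, hmfix⟩ := Nat.find_spec hex
  have hmid : ∀ s, 1 ≤ s → s < m → (σ ^ s) j ≠ i ∧ (σ ^ s) j ≠ j := by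
    intro s h1 hs
    constructor
    · intro heq
      exact hns (SameCycle.symm ⟨(s:ℤ), by rw [zpow_natCast]; exact heq⟩)
    · intro heq
      exact Nat.find_min hex hs ⟨by omega, heq⟩
  have hw := walk_pow hmid m hm0 le_rfl
  rw [hmfix, Equiv.swap_apply_right] at hw
  exact ⟨(m:ℤ), by rw [zpow_natCast]; exact hw⟩

lemma not_sameCycle_swap_mul (hij : i ≠ j) (hsc : σ.SameCycle i j) :
    ¬ (Equiv.swap i j * σ).SameCycle i j := by
  have hex : ∃ t, 0 < t ∧ (σ ^ t) i = j := by
    obtain ⟨t, -, ht⟩ := hsc.exists_pow_eq'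
    rcases Nat.eq_zero_or_pos t with rfl | hpos
    · simp only [pow_zero, one_apply] at ht
      exact absurd ht hij
    · exact ⟨t, hpos, ht⟩
  set m := Nat.find hex with hmdef
  obtain ⟨hm0, hmfix⟩ := Nat.find_spec hex
  have hmid : ∀ s, 1 ≤ s → s < m → (σ ^ s) i ≠ i ∧ (σ ^ s) i ≠ j := by
    intro s h1 hs
    have hne : (σ ^ s) i ≠ j := fun heq => Nat.find_min hex hs ⟨by omega, heq⟩
    refine ⟨?_, hne⟩
    intro heq
    have : (σ ^ (m - s)) i = j := by
      have : (σ ^ (m - s)) ((σ ^ s) i) = (σ ^ m) i := by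
        rw [← mul_apply, ← pow_add]
        congr 2
        omega
      rw [heq, hmfix] at this
      exact this
    exact Nat.find_min hex (show m - s < m by omega) ⟨by omega, this⟩
  have hw := walk_pow hmid m hm0 le_rfl
  rw [hmfix, Equiv.swap_apply_right] at hw
  apply not_sameCycle_of_fix hm0 hw
  intro r hr
  rcases Nat.eq_zero_or_pos r with rfl | hr1
  · simpa using hij
  · rw [walk_pow hmid r hr1 (le_of_lt hr)]
    have := hmid r hr1 hr
    rw [Equiv.swap_apply_of_ne_of_ne this.1 this.2]
    exact this.2

lemma sameCycle_mono (hij : i ≠ j) (hns : ¬ σ.SameCycle i j) {a b : Fin n}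
    (hsc : σ.SameCycle a b) : (Equiv.swap i j * σ).SameCycle a b := by
  have step : ∀ c : Fin n, (Equiv.swap i j * σ).SameCycle c (σ c) := by
    intro c
    have h1 : (Equiv.swap i j * σ).SameCycle c ((Equiv.swap i j * σ) c) := sameCycle_one_step
    by_cases hci : σ c = i
    · have h2 : (Equiv.swap i j * σ) c = j := by
        rw [mul_apply, hci, Equiv.swap_apply_left]
      rw [h2] at h1
      rw [hci]
      exact h1.trans (sameCycle_swap_mul_self hij hns)
    by_cases hcj : σ c = j
    · have h2 : (Equiv.swap i j * σ) c = i := by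
        rw [mul_apply, hcj, Equiv.swap_apply_right]
      rw [h2] at h1
      rw [hcj]
      exact h1.trans (sameCycle_swap_mul_self hij hns).symm
    · have h2 : (Equiv.swap i j * σ) c = σ c := by
        rw [mul_apply, Equiv.swap_apply_of_ne_of_ne hci hcj]
      rwa [h2] at h1
  obtain ⟨t, -, rfl⟩ := hsc.exists_pow_eq'
  clear * - step
  induction t with
  | zero => exact ⟨0, by simp⟩
  | succ t ih =>
    have : (σ ^ (t+1)) a = σ ((σ ^ t) a) := by rw [pow_succ', mul_apply]
    rw [this]
    exact ih.trans (step _)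

lemma sameCycle_swap_mul_structure {a b : Fin n}
    (hsc : (Equiv.swap i j * σ).SameCycle a b) :
    σ.SameCycle a b ∨
      ((σ.SameCycle a i ∨ σ.SameCycle a j) ∧ (σ.SameCycle b i ∨ σ.SameCycle b j)) := by
  suffices aux : ∀ t : ℕ, σ.SameCycle a (((Equiv.swap i j * σ) ^ t) a) ∨
      ((σ.SameCycle a i ∨ σ.SameCycle a j) ∧
        (σ.SameCycle (((Equiv.swap i j * σ) ^ t) a) i ∨
         σ.SameCycle (((Equiv.swap i j * σ) ^ t) a) j)) by
    obtain ⟨t, -, rfl⟩ := hsc.exists_pow_eq'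
    exact aux t
  intro t
  induction t with
  | zero => left; exact ⟨0, by simp⟩
  | succ t ih =>
    set c := ((Equiv.swap i j * σ) ^ t) a with hc
    have hb : ((Equiv.swap i j * σ) ^ (t+1)) a = Equiv.swap i j (σ c) := by
      rw [pow_succ', mul_apply, mul_apply]
    rw [hb]
    have hstep : σ.SameCycle c (σ c) := sameCycle_one_step
    by_cases hci : σ c = i
    · rw [hci, Equiv.swap_apply_left]
      have hcI : σ.SameCycle c i := hci ▸ hstep
      right
      refine ⟨?_, Or.inr ⟨0, by simp⟩⟩
      rcases ih with h1 | ⟨h2, _⟩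
      · exact Or.inl (h1.trans hcI)
      · exact h2
    by_cases hcj : σ c = j
    · rw [hcj, Equiv.swap_apply_right]
      have hcJ : σ.SameCycle c j := hcj ▸ hstep
      right
      refine ⟨?_, Or.inl ⟨0, by simp⟩⟩
      rcases ih with h1 | ⟨h2, _⟩
      · exact Or.inr (h1.trans hcJ)
      · exact h2
    · rw [Equiv.swap_apply_of_ne_of_ne hci hcj]
      rcases ih with h1 | ⟨h2, h3⟩
      · exact Or.inl (h1.trans hstep)
      · right
        refine ⟨h2, ?_⟩
        rcases h3 with h3 | h3
        · exact Or.inl (hstep.symm.trans h3)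
        · exact Or.inr (hstep.symm.trans h3)

lemma permCycles_merge (hij : i ≠ j) (hns : ¬ σ.SameCycle i j) :
    permCycles σ = permCycles (Equiv.swap i j * σ) + 1 := by
  classical
  set σ' := Equiv.swap i j * σ with hσ'
  letI : Fintype (pcQ σ) := Fintype.ofFinite _
  letI : Fintype (pcQ σ') := Fintype.ofFinite _
  -- the canonical map
  set G : pcQ σ → pcQ σ' := Quotient.map' id (fun a b hr => by
    rw [MulAction.orbitRel_apply, orbit_iff_sameCycle] at hr
    show id a ∈ MulAction.orbit _ (id b)
    rw [orbit_iff_sameCycle]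
    exact sameCycle_mono hij hns hr) with hG
  have hGmk : ∀ a : Fin n, G (Quotient.mk'' a) = Quotient.mk'' a := fun a => rfl
  have key : ∀ c : pcQ σ',
      (Finset.univ.filter fun q => G q = c).card
        = 1 + (if c = (Quotient.mk'' i : pcQ σ') then 1 else 0) := by
    intro c
    induction c using Quotient.inductionOn' with
    | h x =>
    by_cases hx : σ'.SameCycle x i
    · have hc : (Quotient.mk'' x : pcQ σ') = Quotient.mk'' i := pcQ_mk_eq.mpr hx.symm
      rw [if_pos hc]
      have hfil : (Finset.univ.filter fun q => G q = (Quotient.mk'' x : pcQ σ'))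
          = {(Quotient.mk'' i : pcQ σ), Quotient.mk'' j} := by
        ext q
        induction q using Quotient.inductionOn' with
        | h a =>
        simp only [Finset.mem_filter, Finset.mem_univ, true_and, Finset.mem_insert,
          Finset.mem_singleton]
        rw [hGmk a, pcQ_mk_eq, pcQ_mk_eq, pcQ_mk_eq]
        constructor
        · intro hsc
          have hia : σ'.SameCycle i a := hx.symm.trans hsc
          rcases sameCycle_swap_mul_structure hia with h1 | ⟨-, h2⟩
          · exact Or.inl h1
          · rcases h2 with h2 | h2
            · exact Or.inl h2.symm
            · exact Or.inr h2.symm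
        · rintro (hsc | hsc)
          · exact hx.trans (sameCycle_mono hij hns hsc)
          · exact (hx.trans (sameCycle_swap_mul_self hij hns).symm).trans
              (sameCycle_mono hij hns hsc)
      rw [hfil, Finset.card_insert_of_notMem, Finset.card_singleton]
      rw [Finset.mem_singleton]
      intro heq
      exact hns (pcQ_mk_eq.mp heq).symm
    · have hc : (Quotient.mk'' x : pcQ σ') ≠ Quotient.mk'' i := by
        intro heq
        exact hx (pcQ_mk_eq.mp heq).symm
      rw [if_neg hc]
      have hfil : (Finset.univ.filter fun q => G q = (Quotient.mk'' x : pcQ σ'))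
          = {(Quotient.mk'' x : pcQ σ)} := by
        ext q
        induction q using Quotient.inductionOn' with
        | h a =>
        simp only [Finset.mem_filter, Finset.mem_univ, true_and, Finset.mem_singleton]
        rw [hGmk a, pcQ_mk_eq, pcQ_mk_eq]
        constructor
        · intro hsc
          rcases sameCycle_swap_mul_structure hsc with h1 | ⟨h2, -⟩
          · exact h1
          · exfalso
            rcases h2 with h2 | h2
            · exact hx (sameCycle_mono hij hns h2)
            · exact hx ((sameCycle_mono hij hns h2).trans
                (sameCycle_swap_mul_self hij hns))
        · exact fun hsc => sameCycle_mono hij hns hsc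
      rw [hfil, Finset.card_singleton]
  have hsum : (Finset.univ : Finset (pcQ σ)).card
      = ∑ c : pcQ σ', (Finset.univ.filter fun q => G q = c).card :=
    Finset.card_eq_sum_card_fiberwise
      (fun (q : pcQ σ) (_ : q ∈ Finset.univ) => Finset.mem_univ (G q))
  rw [permCycles, permCycles, Nat.card_eq_fintype_card, Nat.card_eq_fintype_card,
    ← Finset.card_univ, hsum]
  rw [Finset.sum_congr rfl (fun c _ => key c), Finset.sum_add_distrib]
  simp [Finset.card_univ]

lemma permCycles_one : permCycles (1 : Equiv.Perm (Fin n)) = n := by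
  rw [permCycles, ← Nat.card_eq_of_bijective (Quotient.mk'' : Fin n → pcQ 1), Nat.card_eq_fintype_card, Fintype.card_fin]
  constructor
  · intro a b hab
    obtain ⟨q, hq⟩ := pcQ_mk_eq.mp hab
    simpa using hq.symm
  · exact fun q => Quotient.inductionOn' q (fun a => ⟨a, rfl⟩)

lemma permCycles_le : permCycles σ ≤ n := by
  rw [permCycles]
  calc Nat.card (pcQ σ) ≤ Nat.card (Fin n) :=
        Nat.card_le_card_of_surjective _ (Quotient.mk''_surjective)
    _ = n := by simp

lemma fix_walk (hfix : ∀ y, h.SameCycle x y → u y = y) :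
    ∀ q : ℤ, ((u * h) ^ q) x = (h ^ q) x := by
  intro q
  induction q using Int.induction_on with
  | zero => simp
  | succ q ih =>
      have h1 : ((u * h) ^ ((q:ℤ) + 1)) x = (u * h) (((u * h) ^ (q:ℤ)) x) := by
        rw [add_comm, zpow_add, zpow_one, mul_apply]
      rw [h1, ih, mul_apply]
      have h2 : h ((h ^ (q:ℤ)) x) = (h ^ ((q:ℤ)+1)) x := by
        rw [add_comm, zpow_add, zpow_one, mul_apply]
      rw [h2]
      exact hfix _ ⟨(q:ℤ)+1, rfl⟩
  | pred q ih =>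
      have h1 : ((u * h) ^ (-(q:ℤ) - 1)) x = (u * h)⁻¹ (((u * h) ^ (-(q:ℤ))) x) := by
        rw [show -(q:ℤ) - 1 = -1 + -(q:ℤ) by ring, zpow_add, zpow_neg_one, mul_apply]
      rw [h1, ih, mul_inv_rev, mul_apply]
      have h2 : u⁻¹ ((h ^ (-(q:ℤ))) x) = (h ^ (-(q:ℤ))) x := by
        rw [Equiv.Perm.inv_eq_iff_eq]
        exact (hfix _ ⟨-(q:ℤ), rfl⟩).symm
      rw [h2]
      have h3 : h⁻¹ ((h ^ (-(q:ℤ))) x) = (h ^ (-1 + -(q:ℤ))) x := by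
        rw [zpow_add, zpow_neg_one, mul_apply]
      rw [h3, show (-1 + -(q:ℤ)) = -(q:ℤ) - 1 by ring]

lemma sameCycle_mul_left_iff (hfix : ∀ y, h.SameCycle x y → u y = y) :
    (u * h).SameCycle x y ↔ h.SameCycle x y := by
  constructor
  · rintro ⟨q, hq⟩
    exact ⟨q, by rw [← fix_walk hfix q]; exact hq⟩
  · rintro ⟨q, hq⟩
    exact ⟨q, by rw [fix_walk hfix q]; exact hq⟩

lemma swap_mul_support {u : Equiv.Perm (Fin n)} (hij : u i = j) (hne : i ≠ j) :
    ∀ x, (Equiv.swap i j * u) x ≠ x → (u x ≠ x ∧ x ≠ i) := by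
  intro x hx
  constructor
  · intro hfix
    apply hx
    rw [mul_apply, hfix]
    rcases eq_or_ne x i with rfl | hxi
    · exact absurd (hfix.symm.trans hij) hne
    · rcases eq_or_ne x j with rfl | hxj
      · exfalso
        exact hxi (u.injective (hij.trans hfix.symm) : i = x).symm
      · exact Equiv.swap_apply_of_ne_of_ne hxi hxj
  · intro hxi
    subst hxi
    apply hx
    rw [mul_apply, hij, Equiv.swap_apply_right]

lemma permCycles_mul_add (h : Equiv.Perm (Fin n)) :
    ∀ m (u : Equiv.Perm (Fin n)), u.support.card ≤ m →
      (∀ x y, h.SameCycle x y → u x ≠ x → u y ≠ y → x = y) →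
      permCycles (u * h) + n = permCycles u + permCycles h := by
  intro m
  induction m with
  | zero =>
    intro u hcard _
    have : u = 1 := by
      rw [← Equiv.Perm.support_eq_empty_iff]
      exact Finset.card_eq_zero.mp (Nat.le_zero.mp hcard)
    subst this
    rw [one_mul, permCycles_one]
    omega
  | succ m ih =>
    intro u hcard hsep
    by_cases hu1 : u = 1
    · subst hu1
      rw [one_mul, permCycles_one]
      omega
    · -- pick a moved point
      obtain ⟨i, hi⟩ : ∃ i, u i ≠ i := by
        by_contra hall
        push_neg at hall
        exact hu1 (Equiv.ext fun x => (hall x).trans (Equiv.Perm.one_apply x).symm)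
      set j := u i with hj
      have hij : i ≠ j := fun e => hi e.symm
      set u' := Equiv.swap i j * u with hu'
      have hu'i : u' i = i := by
        rw [hu', mul_apply, ← hj, Equiv.swap_apply_right]
      have hswapu : Equiv.swap i j * u' = u := by
        rw [hu', ← mul_assoc, Equiv.swap_mul_self, one_mul]
      -- u' has smaller support
      have hsupp : ∀ x, u' x ≠ x → (u x ≠ x ∧ x ≠ i) := swap_mul_support hj.symm hij
      have hcard' : u'.support.card ≤ m := by
        have hsub : u'.support ⊆ u.support.erase i := by
          intro x hx
          rw [Equiv.Perm.mem_support] at hx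
          obtain ⟨h1, h2⟩ := hsupp x hx
          exact Finset.mem_erase.mpr ⟨h2, Equiv.Perm.mem_support.mpr h1⟩
        have := Finset.card_le_card hsub
        have hmem : i ∈ u.support := Equiv.Perm.mem_support.mpr hi
        have := Finset.card_erase_of_mem hmem
        omega
      -- u' doesn't connect i j
      have hns' : ¬ u'.SameCycle i j := by
        apply not_sameCycle_of_fix (m := 1) one_pos (by simpa using hu'i)
        intro r hr
        interval_cases r
        simpa using hij
      -- ν u' = ν u + 1
      have hνu : permCycles u' = permCycles u + 1 := by
        rw [← hswapu] at *
        exact permCycles_merge hij hns'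
      -- h cycle of i is u'-fixed
      have hfix : ∀ y, h.SameCycle i y → u' y = y := by
        intro y hy
        by_contra hne
        obtain ⟨h1, h2⟩ := hsupp y hne
        exact h2 (hsep i y hy hi h1).symm
      have hmoved_j : u j ≠ j := fun e => hij (u.injective (hj.symm.trans e.symm))
      have hnsh : ¬ h.SameCycle i j := fun hsc => hij (hsep i j hsc hi hmoved_j)
      have hns'' : ¬ (u' * h).SameCycle i j := by
        rw [sameCycle_mul_left_iff hfix]
        exact hnsh
      have hνuh : permCycles (u' * h) = permCycles (u * h) + 1 := by
        have : Equiv.swap i j * (u' * h) = u * h := by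
          rw [← mul_assoc, hswapu]
        rw [← this]
        exact permCycles_merge hij hns''
      have hsep' : ∀ x y, h.SameCycle x y → u' x ≠ x → u' y ≠ y → x = y := by
        intro x y hxy hx hy
        exact hsep x y hxy (hsupp x hx).1 (hsupp y hy).1
      have := ih u' hcard' hsep'
      omega

lemma permCycles_sep (h : Equiv.Perm (Fin n)) (u : Equiv.Perm (Fin n))
    (hsep : ∀ x y, h.SameCycle x y → u x ≠ x → u y ≠ y → x = y) :
    permCycles (u * h) + n = permCycles u + permCycles h :=
  permCycles_mul_add h u.support.card u le_rfl hsep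

lemma permCycles_swap (hij : i ≠ j) : permCycles (Equiv.swap i j) + 1 = n := by
  have hns : ¬ (1 : Equiv.Perm (Fin n)).SameCycle i j := by
    rintro ⟨q, hq⟩
    rw [one_zpow] at hq
    exact hij hq
  have := permCycles_merge hij hns
  rw [mul_one, permCycles_one] at this
  omega

lemma permCycles_split (hij : i ≠ j) (hsc : h.SameCycle i j) :
    permCycles (Equiv.swap i j * h) = permCycles h + 1 := by
  have hflip := not_sameCycle_swap_mul hij hsc
  have := permCycles_merge hij hflip
  rw [← mul_assoc, Equiv.swap_mul_self, one_mul] at this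
  omega

lemma swap_zpow (a b : Fin n) (q : ℤ) :
    ((Equiv.swap a b : Equiv.Perm (Fin n)) ^ q) = 1 ∨
      ((Equiv.swap a b : Equiv.Perm (Fin n)) ^ q) = Equiv.swap a b := by
  have h2 : (Equiv.swap a b : Equiv.Perm (Fin n)) ^ (2:ℤ) = 1 := by
    rw [show (2:ℤ) = 1 + 1 by ring, zpow_add, zpow_one, Equiv.swap_mul_self]
  have hred : (Equiv.swap a b : Equiv.Perm (Fin n)) ^ q
      = (Equiv.swap a b : Equiv.Perm (Fin n)) ^ (q % 2) := by
    conv_lhs => rw [show q = 2 * (q / 2) + q % 2 by omega]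
    rw [zpow_add, zpow_mul, h2, one_zpow, one_mul]
  rcases Int.emod_two_eq_zero_or_one q with he | he
  · left; rw [hred, he, zpow_zero]
  · right; rw [hred, he, zpow_one]

lemma sameCycle_swap {a b x y : Fin n} (hsc : (Equiv.swap a b).SameCycle x y) :
    y = x ∨ y = Equiv.swap a b x := by
  obtain ⟨q, hq⟩ := hsc
  rcases swap_zpow a b q with hz | hz <;> rw [hz] at hq
  · left; exact hq.symm
  · right; exact hq.symm

lemma sep_swap {k : ℕ} {w : Equiv.Perm (Fin n)} (hw : inSymSub n k w) {t p : Fin n}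
    (hp : k ≤ (p:ℕ)) :
    ∀ x y, (Equiv.swap t p).SameCycle x y → w x ≠ x → w y ≠ y → x = y := by
  intro x y hsc hx hy
  rcases sameCycle_swap hsc with rfl | rfl
  · rfl
  · by_cases hxt : x = t
    · rw [hxt, Equiv.swap_apply_left] at hy
      exact absurd (hw p hp) hy
    · by_cases hxp : x = p
      · rw [hxp] at hx
        exact absurd (hw p hp) hx
      · rw [Equiv.swap_apply_of_ne_of_ne hxt hxp]

lemma card_filter_lt {k : ℕ} (hkn : k ≤ n) :
    (Finset.univ.filter fun t : Fin n => (t:ℕ) < k).card = k := by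
  rcases Nat.lt_or_ge k n with hk | hk
  · have heq : (Finset.univ.filter fun t : Fin n => (t:ℕ) < k) = Finset.Iio ⟨k, hk⟩ := by
      ext t
      simp [Fin.lt_def]
    rw [heq, Fin.card_Iio]
  · have hkn' : k = n := le_antisymm hkn hk
    have heq : (Finset.univ.filter fun t : Fin n => (t:ℕ) < k) = Finset.univ := by
      ext t
      simpa using lt_of_lt_of_le t.isLt hk
    rw [heq, Finset.card_univ, Fintype.card_fin, hkn']

lemma sumk (n : ℕ) : ∀ k, k ≤ n →
    ∑ w ∈ Finset.univ.filter (inSymSub n k),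
        (Polynomial.X : Polynomial ℤ) ^ (n - permCycles w) =
      ∏ j ∈ Finset.Icc 1 (k - 1), (1 + (j : Polynomial ℤ) * Polynomial.X) := by
  intro k
  induction k with
  | zero =>
    intro _
    have hfil : Finset.univ.filter (inSymSub n 0) = {(1 : Equiv.Perm (Fin n))} := by
      ext w
      simp only [Finset.mem_filter, Finset.mem_univ, true_and, Finset.mem_singleton]
      constructor
      · intro hw
        exact Equiv.ext fun x => (hw x (Nat.zero_le _)).trans (Equiv.Perm.one_apply x).symm
      · rintro rfl
        intro x _
        rfl
    rw [hfil, Finset.sum_singleton, permCycles_one]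
    simp
  | succ k ih =>
    intro hkn
    have hk : k < n := hkn
    have hkle : k ≤ n := le_of_lt hk
    have ihk := ih hkle
    set p : Fin n := ⟨k, hk⟩ with hpdef
    have hpval : (p : ℕ) = k := rfl
    have hwfix : ∀ w : Equiv.Perm (Fin n), inSymSub n k w → w⁻¹ p = p := by
      intro w hw
      have := hw p le_rfl
      exact (Equiv.Perm.inv_eq_iff_eq).mpr this.symm
    have hinv_le : ∀ w : Equiv.Perm (Fin n), inSymSub n (k+1) w → ((w⁻¹ p : Fin n) : ℕ) ≤ k := by
      intro w hw
      by_contra hgt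
      push_neg at hgt
      have h1 : w (w⁻¹ p) = w⁻¹ p := hw _ (by omega)
      rw [← Equiv.Perm.mul_apply, mul_inv_cancel, Equiv.Perm.one_apply] at h1
      have h2 := congrArg Fin.val h1
      rw [hpval] at h2
      omega
    -- reindex
    have hbij : ∑ w ∈ Finset.univ.filter (inSymSub n (k+1)),
        (Polynomial.X : Polynomial ℤ) ^ (n - permCycles w)
        = ∑ x ∈ (Finset.univ.filter (inSymSub n k)) ×ˢ
            (Finset.univ.filter fun t : Fin n => (t:ℕ) ≤ k),
          (Polynomial.X : Polynomial ℤ) ^ (n - permCycles (x.1 * Equiv.swap x.2 p)) := by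
      refine Finset.sum_nbij' (fun w => (w * Equiv.swap (w⁻¹ p) p, w⁻¹ p))
        (fun x => x.1 * Equiv.swap x.2 p) ?_ ?_ ?_ ?_ ?_
      · intro w hw
        rw [Finset.mem_filter] at hw
        have hw' := hw.2
        have hq := hinv_le w hw'
        rw [Finset.mem_product, Finset.mem_filter, Finset.mem_filter]
        refine ⟨⟨Finset.mem_univ _, ?_⟩, Finset.mem_univ _, hq⟩
        intro x hx
        rcases eq_or_ne x p with rfl | hxp
        · rw [mul_apply, Equiv.swap_apply_right, ← Equiv.Perm.mul_apply, mul_inv_cancel, Equiv.Perm.one_apply]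
        · have hxk : k + 1 ≤ (x:ℕ) := by
            rcases Nat.lt_or_ge (x:ℕ) (k+1) with h' | h'
            · exact absurd (Fin.ext (by omega : (x:ℕ) = (p:ℕ))) hxp
            · exact h'
          have hxq : x ≠ w⁻¹ p := fun he => by
            rw [he] at hxk; omega
          rw [mul_apply, Equiv.swap_apply_of_ne_of_ne hxq hxp]
          exact hw' x (by omega)
      · rintro ⟨w', t⟩ hx
        rw [Finset.mem_product, Finset.mem_filter, Finset.mem_filter] at hx
        obtain ⟨⟨-, hw'⟩, -, ht⟩ := hx
        dsimp only at hw' ht ⊢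
        rw [Finset.mem_filter]
        refine ⟨Finset.mem_univ _, ?_⟩
        intro x hx
        have hxp : x ≠ p := by
          intro he
          have := congrArg Fin.val he
          rw [hpval] at this
          omega
        have hxt : x ≠ t := by
          intro he
          have := congrArg Fin.val he
          omega
        rw [mul_apply, Equiv.swap_apply_of_ne_of_ne hxt hxp]
        exact hw' x (by omega)
      · intro w _
        dsimp only
        rw [mul_assoc, Equiv.swap_mul_self, mul_one]
      · rintro ⟨w', t⟩ hx
        rw [Finset.mem_product, Finset.mem_filter, Finset.mem_filter] at hx
        obtain ⟨⟨-, hw'⟩, -, ht⟩ := hx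
        dsimp only at hw' ht ⊢
        have hz : (w' * Equiv.swap t p)⁻¹ p = t := by
          rw [mul_inv_rev, mul_apply, hwfix w' hw', Equiv.swap_inv, Equiv.swap_apply_right]
        simp only [Prod.mk.injEq]
        rw [hz]
        exact ⟨by rw [mul_assoc, Equiv.swap_mul_self, mul_one], rfl⟩
      · intro w _
        dsimp only
        rw [mul_assoc, Equiv.swap_mul_self, mul_one]
    rw [hbij, Finset.sum_product]
    -- inner sums
    have hinner : ∀ w' ∈ Finset.univ.filter (inSymSub n k),
        ∑ t ∈ Finset.univ.filter (fun t : Fin n => (t:ℕ) ≤ k),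
            (Polynomial.X : Polynomial ℤ) ^ (n - permCycles (w' * Equiv.swap t p))
          = (Polynomial.X : Polynomial ℤ) ^ (n - permCycles w')
              * (1 + (k : Polynomial ℤ) * Polynomial.X) := by
      intro w' hw'mem
      rw [Finset.mem_filter] at hw'mem
      have hw' := hw'mem.2
      have hterm : ∀ t ∈ Finset.univ.filter (fun t : Fin n => (t:ℕ) ≤ k),
          (Polynomial.X : Polynomial ℤ) ^ (n - permCycles (w' * Equiv.swap t p))
            = (Polynomial.X : Polynomial ℤ) ^ (n - permCycles w')
              * (if t = p then 1 else Polynomial.X) := by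
        intro t htmem
        rcases eq_or_ne t p with rfl | htp
        · rw [if_pos rfl, mul_one]
          congr 2
          rw [Equiv.swap_self]
          show permCycles (w' * 1) = permCycles w'
          rw [mul_one]
        · rw [if_neg htp]
          have hsep := sep_swap (n := n) hw' (t := t) (p := p) le_rfl
          have hkey := permCycles_sep (Equiv.swap t p) w' hsep
          have hsw : permCycles (Equiv.swap t p) + 1 = n := permCycles_swap htp
          have hle1 : permCycles w' ≤ n := permCycles_le
          have hle2 : permCycles (w' * Equiv.swap t p) ≤ n := permCycles_le
          have hexp : n - permCycles (w' * Equiv.swap t p) = (n - permCycles w') + 1 := by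
            omega
          rw [hexp, pow_add, pow_one]
      rw [Finset.sum_congr rfl hterm, ← Finset.mul_sum]
      congr 1
      -- ∑ t ∈ T, ite = 1 + k X
      have hT : (Finset.univ.filter fun t : Fin n => (t:ℕ) ≤ k)
          = insert p (Finset.univ.filter fun t : Fin n => (t:ℕ) < k) := by
        ext t
        simp only [Finset.mem_filter, Finset.mem_univ, true_and, Finset.mem_insert]
        constructor
        · intro hle
          rcases Nat.lt_or_ge (t:ℕ) k with h' | h'
          · exact Or.inr h'
          · exact Or.inl (Fin.ext (by omega))
        · rintro (rfl | hlt)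
          · exact le_of_eq hpval
          · exact le_of_lt hlt
      rw [hT, Finset.sum_insert (by simp [hpval]), if_pos rfl]
      congr 1
      have : ∀ t ∈ Finset.univ.filter (fun t : Fin n => (t:ℕ) < k),
          (if t = p then (1:Polynomial ℤ) else Polynomial.X) = Polynomial.X := by
        intro t htmem
        rw [Finset.mem_filter] at htmem
        rw [if_neg]
        intro he
        rw [he, hpval] at htmem
        omega
      rw [Finset.sum_congr rfl this, Finset.sum_const, card_filter_lt hkle, nsmul_eq_mul]
    rw [Finset.sum_congr rfl hinner, ← Finset.sum_mul, ihk]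
    -- product identity
    rcases Nat.eq_zero_or_pos k with rfl | hk0
    · simp
    · have h1 : k + 1 - 1 = (k - 1) + 1 := by omega
      rw [h1, Finset.prod_Icc_succ_top (by omega : 1 ≤ (k-1)+1),
        show k - 1 + 1 = k by omega]

lemma inSymSub_mul {k : ℕ} {a b : Equiv.Perm (Fin n)} (ha : inSymSub n k a)
    (hb : inSymSub n k b) : inSymSub n k (a * b) := by
  intro x hx
  rw [mul_apply, hb x hx, ha x hx]

lemma inSymSub_inv {k : ℕ} {a : Equiv.Perm (Fin n)} (ha : inSymSub n k a) :
    inSymSub n k a⁻¹ := by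
  intro x hx
  rw [Equiv.Perm.inv_eq_iff_eq, ha x hx]

lemma inSymSub_swap {k : ℕ} (hx : (x:ℕ) < k) (hy : (y:ℕ) < k) :
    inSymSub n k (Equiv.swap x y) := by
  intro z hz
  have hzx : z ≠ x := fun he => by rw [he] at hz; omega
  have hzy : z ≠ y := fun he => by rw [he] at hz; omega
  exact Equiv.swap_apply_of_ne_of_ne hzx hzy

/-- For `1 ≤ k ≤ n`, `g ∈ S_n`, and any `w₀ ∈ S_k` maximizing `w ↦ ν(wg)` on `S_k`:
`∑_{w ∈ S_k} α^{n−ν(wg)} = α^{n−ν(w₀g)} (1+α)(1+2α)⋯(1+(k−1)α)` in `ℤ[α]`. -/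
theorem stmt2 (n k : ℕ) (hk1 : 1 ≤ k) (hkn : k ≤ n) (g w₀ : Equiv.Perm (Fin n))
    (hw₀ : inSymSub n k w₀)
    (hmax : ∀ w : Equiv.Perm (Fin n), inSymSub n k w →
      permCycles (w * g) ≤ permCycles (w₀ * g)) :
    ∑ w ∈ Finset.univ.filter (inSymSub n k),
        (Polynomial.X : Polynomial ℤ) ^ (n - permCycles (w * g)) =
    Polynomial.X ^ (n - permCycles (w₀ * g)) *
      ∏ j ∈ Finset.Icc 1 (k - 1), (1 + (j : Polynomial ℤ) * Polynomial.X) := by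
  set h : Equiv.Perm (Fin n) := w₀ * g with hh
  have hmax' : ∀ u, inSymSub n k u → permCycles (u * h) ≤ permCycles h := by
    intro u hu
    have := hmax (u * w₀) (inSymSub_mul hu hw₀)
    rwa [mul_assoc, ← hh] at this
  have hsepK : ∀ x y : Fin n, (x:ℕ) < k → (y:ℕ) < k → h.SameCycle x y → x = y := by
    intro x y hx hy hsc
    by_contra hne
    have := hmax' _ (inSymSub_swap hx hy)
    rw [permCycles_split hne hsc] at this
    omega
  have hadd : ∀ u, inSymSub n k u →
      n - permCycles (u * h) = (n - permCycles h) + (n - permCycles u) := by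
    intro u hu
    have hsep : ∀ x y : Fin n, h.SameCycle x y → u x ≠ x → u y ≠ y → x = y := by
      intro x y hsc hx hy
      have hxk : (x:ℕ) < k := by
        by_contra hge
        push_neg at hge
        exact hx (hu x hge)
      have hyk : (y:ℕ) < k := by
        by_contra hge
        push_neg at hge
        exact hy (hu y hge)
      exact hsepK x y hxk hyk hsc
    have h0 := permCycles_sep h u hsep
    have h1 : permCycles u ≤ n := permCycles_le
    have h2 : permCycles h ≤ n := permCycles_le
    omega
  have hre : ∑ w ∈ Finset.univ.filter (inSymSub n k),
      (Polynomial.X : Polynomial ℤ) ^ (n - permCycles (w * g))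
      = ∑ u ∈ Finset.univ.filter (inSymSub n k),
        (Polynomial.X : Polynomial ℤ) ^ (n - permCycles (u * h)) := by
    refine Finset.sum_nbij' (fun w => w * w₀⁻¹) (fun u => u * w₀) ?_ ?_ ?_ ?_ ?_
    · intro w hw
      rw [Finset.mem_filter] at hw ⊢
      exact ⟨Finset.mem_univ _, inSymSub_mul hw.2 (inSymSub_inv hw₀)⟩
    · intro u hu
      rw [Finset.mem_filter] at hu ⊢
      exact ⟨Finset.mem_univ _, inSymSub_mul hu.2 hw₀⟩
    · intro w _
      rw [inv_mul_cancel_right]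
    · intro u _
      rw [mul_inv_cancel_right]
    · intro w _
      congr 2
      rw [hh, ← mul_assoc, inv_mul_cancel_right]
  rw [hre, Finset.sum_congr rfl (fun u hu => by
      rw [hadd u (Finset.mem_filter.mp hu).2, pow_add]),
    ← Finset.mul_sum, sumk n k hkn]
end

section
/- Fix n ≥ 1, a nonzero complex number q, and a map κ : {1,…,n} → ℤ. For a permutation w ∈ S_n and 1 ≤ i ≤ n−1, define θ_0(w,i) := 1−q² if κ(w(i)) > κ(w(i+1)) and θ_0(w,i) := 0 otherwise; define θ_1(w,i) := 1 if κ(w(i)) = κ(w(i+1)) and θ_1(w,i) := q otherwise. Write s_i for the transposition (i, i+1), and set s_i^0 := identity and s_i^1 := s_i. Then for every l ≥ 0, every sequence of indices i_1,…,i_l ∈ {1,…,n−1}, every sequence j_1,…,j_l ∈ {0,1}, and all σ, τ ∈ S_n satisfying κ∘(σ s_{i_1}^{j_1} ⋯ s_{i_l}^{j_l}) = κ∘τ (as functions on {1,…,n}), the following product identity holds: θ_{j_1}(σ, i_1) · θ_{j_2}(σ s_{i_1}^{j_1}, i_2) ⋯ θ_{j_l}(σ s_{i_1}^{j_1} ⋯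 s_{i_{l−1}}^{j_{l−1}}, i_l) = θ_{j_l}(τ, i_l) · θ_{j_{l−1}}(τ s_{i_l}^{j_l}, i_{l−1}) ⋯ θ_{j_1}(τ s_{i_l}^{j_l} ⋯ s_{i_2}^{j_2}, i_1). -/
/-- `s_i^j` for `j ∈ {0,1}`: the identity if `j = 0` (`b = false`),
and the simple transposition `s_i = (i, i+1)` if `j = 1` (`b = true`)
(positions of `Fin n` indexed from `0`, so `s_i` swaps `i` and `i+1`). -/
def sPow (n : ℕ) (i : ℕ) (b : Bool) : Equiv.Perm (Fin n) :=
  if b then (if h : i + 1 < n then Equiv.swap ⟨i, by omega⟩ ⟨i + 1, h⟩ else 1) else 1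

/-- `θ_j(w, i)` for `j ∈ {0,1}` (here `b = false` encodes `θ_0`, `b = true` encodes `θ_1`):
`θ_0(w,i) = 1 − q²` if `κ(w(i)) > κ(w(i+1))` and `0` otherwise;
`θ_1(w,i) = 1` if `κ(w(i)) = κ(w(i+1))` and `q` otherwise. -/
def theta (n : ℕ) (q : ℂ) (κ : Fin n → ℤ) (b : Bool) (w : Equiv.Perm (Fin n)) (i : ℕ) : ℂ :=
  if h : i + 1 < n then
    (if b then (if κ (w ⟨i, by omega⟩) = κ (w ⟨i + 1, h⟩) then 1 else q)
     else (if κ (w ⟨i + 1, h⟩) < κ (w ⟨i, by omega⟩) then 1 - q ^ 2 else 0))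
  else 0

/-- each `sPow` is an involution -/
lemma sPow_mul_self (n i : ℕ) (b : Bool) : sPow n i b * sPow n i b = 1 := by
  unfold sPow
  cases b
  · simp
  · simp only [if_true]
    split
    · exact Equiv.swap_mul_self _ _
    · simp

/-- the reverse product of a list of involutions is the inverse of the product -/
lemma reverse_prod_inv {G : Type*} [Group G] :
    ∀ (l : List G), (∀ g ∈ l, g * g = 1) → l.reverse.prod = l.prod⁻¹
  | [], _ => by simp
  | g :: l, h => by
    have hg : g⁻¹ = g := (inv_eq_of_mul_eq_one_right (h g List.mem_cons_self)).symm ▸ rfl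
    have hg' : g⁻¹ = g := inv_eq_of_mul_eq_one_right (h g List.mem_cons_self)
    rw [List.reverse_cons, List.prod_append,
      reverse_prod_inv l (fun x hx => h x (List.mem_cons_of_mem _ hx))]
    simp [mul_inv_rev, hg']

/-- key congruence: if `κ∘(σ·s_i^b) = κ∘τ` then `θ_b(σ,i) = θ_b(τ,i)` -/
lemma theta_congr (n : ℕ) (q : ℂ) (κ : Fin n → ℤ) (b : Bool) (i : ℕ)
    (σ τ : Equiv.Perm (Fin n))
    (h : ∀ x, κ ((σ * sPow n i b) x) = κ (τ x)) :
    theta n q κ b σ i = theta n q κ b τ i := by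
  unfold theta
  by_cases hi : i + 1 < n
  · rw [dif_pos hi, dif_pos hi]
    cases b
    · simp only [sPow, Bool.false_eq_true, if_false, mul_one] at h
      rw [h, h]
    · have hs : sPow n i true = Equiv.swap ⟨i, by omega⟩ ⟨i + 1, hi⟩ := by
        simp [sPow, hi]
      have h1 : κ (σ ⟨i + 1, hi⟩) = κ (τ ⟨i, by omega⟩) := by
        have := h ⟨i, by omega⟩
        simpa [hs, Equiv.Perm.mul_apply, Equiv.swap_apply_left] using this
      have h2 : κ (σ ⟨i, by omega⟩) = κ (τ ⟨i + 1, hi⟩) := by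
        have := h ⟨i + 1, hi⟩
        simpa [hs, Equiv.Perm.mul_apply, Equiv.swap_apply_right] using this
      simp only [if_true, h1, h2]
      by_cases hc : κ (τ ⟨i + 1, hi⟩) = κ (τ ⟨i, by omega⟩)
      · rw [if_pos hc, if_pos hc.symm]
      · rw [if_neg hc, if_neg (fun e => hc e.symm)]
  · rw [dif_neg hi, dif_neg hi]

/-- the left-hand side as a recursion over a list of (index, bit) pairs -/
def Lhs (n : ℕ) (q : ℂ) (κ : Fin n → ℤ) : Equiv.Perm (Fin n) → List (ℕ × Bool) → ℂ
  | _, [] => 1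
  | σ, p :: rest => theta n q κ p.2 σ p.1 * Lhs n q κ (σ * sPow n p.1 p.2) rest

/-- the right-hand side as a recursion over a list of (index, bit) pairs -/
def Rhs (n : ℕ) (q : ℂ) (κ : Fin n → ℤ) (τ : Equiv.Perm (Fin n)) : List (ℕ × Bool) → ℂ
  | [] => 1
  | p :: rest =>
      theta n q κ p.2 (τ * ((rest.map fun p => sPow n p.1 p.2).reverse).prod) p.1 *
        Rhs n q κ τ rest

lemma main_list (n : ℕ) (q : ℂ) (κ : Fin n → ℤ) :
    ∀ (ps : List (ℕ × Bool)) (σ τ : Equiv.Perm (Fin n)),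
      (∀ x, κ ((σ * (ps.map fun p => sPow n p.1 p.2).prod) x) = κ (τ x)) →
      Lhs n q κ σ ps = Rhs n q κ τ ps
  | [], σ, τ, h => by simp [Lhs, Rhs]
  | p :: rest, σ, τ, h => by
    simp only [List.map_cons, List.prod_cons] at h
    set P : Equiv.Perm (Fin n) := (rest.map fun p => sPow n p.1 p.2).prod with hP
    have hrev : (rest.map fun p => sPow n p.1 p.2).reverse.prod = P⁻¹ := by
      apply reverse_prod_inv
      intro g hg
      obtain ⟨p', _, rfl⟩ := List.mem_map.1 hg
      exact sPow_mul_self n p'.1 p'.2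
    have hcong : ∀ x, κ ((σ * sPow n p.1 p.2) x) = κ ((τ * P⁻¹) x) := by
      intro x
      have := h (P⁻¹ x)
      simpa [Equiv.Perm.mul_apply] using this
    have htail : ∀ x, κ (((σ * sPow n p.1 p.2) * P) x) = κ (τ x) := by
      intro x
      have := h x
      simpa [mul_assoc, Equiv.Perm.mul_apply] using this
    rw [Lhs, Rhs, hrev]
    rw [theta_congr n q κ p.2 p.1 σ (τ * P⁻¹) hcong,
      main_list n q κ rest (σ * sPow n p.1 p.2) τ htail]

lemma bridgeL (n : ℕ) (q : ℂ) (κ : Fin n → ℤ) :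
    ∀ (L : ℕ) (idx : Fin L → ℕ) (bits : Fin L → Bool) (σ : Equiv.Perm (Fin n)),
      ∏ t : Fin L,
        theta n q κ (bits t)
          (σ * ((List.ofFn fun s : Fin L => sPow n (idx s) (bits s)).take (t : ℕ)).prod)
          (idx t)
      = Lhs n q κ σ (List.ofFn fun s : Fin L => (idx s, bits s))
  | 0, idx, bits, σ => by simp [Lhs]
  | L + 1, idx, bits, σ => by
    rw [Fin.prod_univ_succ]
    simp only [List.ofFn_succ, Fin.val_zero, List.take_zero, List.prod_nil, mul_one,
      Fin.val_succ, List.take_succ_cons, List.prod_cons, Lhs]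
    congr 1
    rw [← bridgeL n q κ L (fun s => idx s.succ) (fun s => bits s.succ) (σ * sPow n (idx 0) (bits 0))]
    apply Finset.prod_congr rfl
    intro t _
    rw [mul_assoc]

lemma bridgeR (n : ℕ) (q : ℂ) (κ : Fin n → ℤ) :
    ∀ (L : ℕ) (idx : Fin L → ℕ) (bits : Fin L → Bool) (τ : Equiv.Perm (Fin n)),
      ∏ t : Fin L,
        theta n q κ (bits t)
          (τ * (((List.ofFn fun s : Fin L => sPow n (idx s) (bits s)).drop ((t : ℕ) + 1)).reverse).prod)
          (idx t)
      = Rhs n q κ τ (List.ofFn fun s : Fin L => (idx s, bits s))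
  | 0, idx, bits, τ => by simp [Rhs]
  | L + 1, idx, bits, τ => by
    rw [Fin.prod_univ_succ]
    simp only [List.ofFn_succ, Fin.val_zero, List.drop_succ_cons, List.drop_zero,
      Fin.val_succ, Rhs]
    congr 1
    · congr 2
      rw [List.map_ofFn]
      rfl
    · rw [← bridgeR n q κ L (fun s => idx s.succ) (fun s => bits s.succ) τ]

/-- Given indices `i_1,…,i_l ∈ {1,…,n−1}` and exponents `j_1,…,j_l ∈ {0,1}`,
if `κ∘(σ s_{i_1}^{j_1} ⋯ s_{i_l}^{j_l}) = κ∘τ` then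
`θ_{j_1}(σ,i_1) θ_{j_2}(σ s_{i_1}^{j_1},i_2) ⋯ θ_{j_l}(σ s_{i_1}^{j_1}⋯s_{i_{l−1}}^{j_{l−1}},i_l)
 = θ_{j_l}(τ,i_l) θ_{j_{l−1}}(τ s_{i_l}^{j_l},i_{l−1}) ⋯ θ_{j_1}(τ s_{i_l}^{j_l}⋯s_{i_2}^{j_2},i_1)`. -/
theorem stmt5 (n : ℕ) (hn : 1 ≤ n) (q : ℂ) (hq : q ≠ 0) (κ : Fin n → ℤ)
    (L : ℕ) (idx : Fin L → ℕ) (hidx : ∀ s : Fin L, idx s + 1 < n) (bits : Fin L → Bool)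
    (σ τ : Equiv.Perm (Fin n))
    (hκτ : ∀ x : Fin n,
      κ ((σ * (List.ofFn fun s : Fin L => sPow n (idx s) (bits s)).prod) x) = κ (τ x)) :
    ∏ t : Fin L,
        theta n q κ (bits t)
          (σ * ((List.ofFn fun s : Fin L => sPow n (idx s) (bits s)).take (t : ℕ)).prod)
          (idx t)
      =
    ∏ t : Fin L,
        theta n q κ (bits t)
          (τ * (((List.ofFn fun s : Fin L => sPow n (idx s) (bits s)).drop ((t : ℕ) + 1)).reverse).prod)
          (idx t) := by
  rw [bridgeL, bridgeR]
  apply main_list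
  intro x
  have hmap : ((List.ofFn fun s : Fin L => (idx s, bits s)).map fun p => sPow n p.1 p.2)
      = List.ofFn fun s : Fin L => sPow n (idx s) (bits s) := by
    rw [List.map_ofFn]; rfl
  rw [hmap]
  exact hκτ x
end

section
/- Let k ≥ 1 and let c_1,…,c_n be a finite sequence (of elements of any type) and fix a value v. If the number of positions p with c_p = v is strictly greater than k · (1 + the number of positions p with c_p ≠ v), then the sequence contains k+1 consecutive entries equal to v; that is, there exists a position p with 1 ≤ p and p+k ≤ n such that c_p = c_{p+1} = ⋯ = c_{p+k} = v. -/
/-- Pigeonhole: if a sequence `c_1,…,c_n` has strictly more than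
`k·(1 + #{p : c_p ≠ v})` entries equal to `v` (with `k ≥ 1`), then it contains
`k+1` consecutive entries equal to `v`. -/
theorem stmt6 {β : Type*} [DecidableEq β] (n k : ℕ) (hk : 1 ≤ k)
    (c : Fin n → β) (v : β)
    (h : k * (1 + (Finset.univ.filter fun p : Fin n => c p ≠ v).card) <
         (Finset.univ.filter fun p : Fin n => c p = v).card) :
    ∃ p : ℕ, ∃ hp : p + k < n, ∀ t : ℕ, ∀ ht : t ≤ k, c ⟨p + t, by omega⟩ = v := by
  by_contra hblock
  push_neg at hblock
  set G : Finset (Fin n) := Finset.univ.filter fun p : Fin n => c p = v with hG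
  set B : Finset (Fin n) := Finset.univ.filter fun p : Fin n => c p ≠ v with hB
  have hGmem : ∀ p : Fin n, p ∈ G ↔ c p = v := by intro p; simp [hG]
  have hBmem : ∀ p : Fin n, p ∈ B ↔ c p ≠ v := by intro p; simp [hB]
  -- f p = nearest bad position strictly to the left of p
  let f : Fin n → WithBot (Fin n) := fun p => (B.filter fun q => q < p).max
  -- fiber bound: each fiber of f on G has at most k elements
  have hfiber : ∀ o ∈ G.image f, (G.filter fun p => f p = o).card ≤ k := by
    intro o _
    -- choose the base of the run depending on o
    obtain ⟨base, hbase1, hbase2⟩ :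
        ∃ base : ℕ,
          (∀ p : Fin n, f p = o → base ≤ p.val) ∧
          (∀ p r : Fin n, f p = o → r ∈ B → r < p → r.val < base) := by
      rcases o with _ | q
      · refine ⟨0, fun p _ => Nat.zero_le _, fun p r hpf hrB hrp => ?_⟩
        have hrmem : r ∈ B.filter fun q => q < p := Finset.mem_filter.2 ⟨hrB, hrp⟩
        have hemp : (B.filter fun q => q < p) = ∅ := Finset.max_eq_bot.1 hpf
        rw [hemp] at hrmem
        exact absurd hrmem (Finset.notMem_empty r)
      · refine ⟨q.val + 1, ?_, ?_⟩
        · intro p hpf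
          have hq : q ∈ B.filter fun r => r < p := Finset.mem_of_max hpf
          exact Finset.mem_filter.1 hq |>.2
        · intro p r hpf hrB hrp
          have hrmem : r ∈ B.filter fun q => q < p := Finset.mem_filter.2 ⟨hrB, hrp⟩
          have hle := Finset.le_max hrmem
          rw [show (B.filter fun q => q < p).max = (q : WithBot (Fin n)) from hpf] at hle
          have : r ≤ q := by exact_mod_cast hle
          omega
    have key : ∀ p ∈ G.filter fun p => f p = o, base ≤ p.val ∧ p.val < base + k := by
      intro p hp
      rw [Finset.mem_filter] at hp
      obtain ⟨hpG, hpf⟩ := hp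
      have hlow := hbase1 p hpf
      refine ⟨hlow, ?_⟩
      by_contra hhigh
      push_neg at hhigh
      have hbn : base + k < n := lt_of_le_of_lt hhigh p.isLt
      obtain ⟨t, ht, hc⟩ := hblock base hbn
      set r : Fin n := ⟨base + t, by omega⟩ with hr
      have hcr : c r ≠ v := hc
      have hrB : r ∈ B := (hBmem r).2 hcr
      have hrp : r.val ≤ p.val := by simp only [hr]; omega
      rcases eq_or_lt_of_le hrp with heq | hlt
      · exact hcr (Fin.ext heq ▸ (hGmem p).1 hpG)
      · have := hbase2 p r hpf hrB hlt
        simp only [hr] at this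
        omega
    calc (G.filter fun p => f p = o).card
        ≤ (Finset.Ico base (base + k)).card := by
          apply Finset.card_le_card_of_injOn (fun p => p.val)
          · intro p hp
            rw [Finset.mem_coe, Finset.mem_Ico]
            exact key p hp
          · intro a _ b _ hab
            exact Fin.ext hab
      _ = k := by simp
  have h1 : G.card ≤ k * (G.image f).card :=
    Finset.card_le_mul_card_image_of_maps_to (fun a ha => Finset.mem_image_of_mem f ha) k hfiber
  have himg : (G.image f) ⊆ insert ⊥ (B.image (fun q : Fin n => (q : WithBot (Fin n)))) := by
    intro o ho
    rw [Finset.mem_image] at ho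
    obtain ⟨p, _, hpf⟩ := ho
    rcases ho2 : o with _ | q
    · exact Finset.mem_insert_self _ _
    · rw [ho2] at hpf
      have hq : q ∈ B.filter fun r => r < p := Finset.mem_of_max hpf
      rw [Finset.mem_filter] at hq
      exact Finset.mem_insert_of_mem (Finset.mem_image_of_mem _ hq.1)
  have h2 : (G.image f).card ≤ 1 + B.card := by
    calc (G.image f).card ≤ (insert ⊥ (B.image (fun q : Fin n => (q : WithBot (Fin n))))).card :=
          Finset.card_le_card himg
      _ ≤ 1 + (B.image _).card := by rw [add_comm]; exact Finset.card_insert_le _ _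
      _ ≤ 1 + B.card := by gcongr; exact Finset.card_image_le
  have := h1.trans (Nat.mul_le_mul_left k h2)
  omega
end

section
/- In the commutative polynomial ring ℤ[α][x_{u,v} : 1 ≤ u,v ≤ n], let 1 ≤ k < n and let (c_1,…,c_n) ∈ {1,…,n}^n be a sequence of column indices containing k+1 consecutive entries equal to 1, i.e. c_{m+1} = c_{m+2} = ⋯ = c_{m+k+1} = 1 for some m with 0 ≤ m ≤ n−k−1. Then the polynomial ∑_{w ∈ S_n} α^{n−ν(w)} ∏_{p=1}^{n} x_{w(p), c_p} is divisible by (1+α)(1+2α)⋯(1+kα). In particular, this polynomial vanishes under the specialization α = −1/k. -/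
open Equiv Equiv.Perm

noncomputable def ncyc {β : Type*} (w : Equiv.Perm β) : ℕ :=
  Nat.card (MulAction.orbitRel.Quotient (Subgroup.zpowers w) β)

def scSetoid {β : Type*} (w : Equiv.Perm β) : Setoid β :=
  ⟨w.SameCycle, ⟨fun x => Equiv.Perm.SameCycle.refl w x, fun h => h.symm, fun h h' => h.trans h'⟩⟩

lemma ncyc_eq_card {β : Type*} (w : Perm β) :
    ncyc w = Nat.card (Quotient (scSetoid w)) := by
  apply Nat.card_congr
  apply Quotient.congrRight
  intro a b
  show a ∈ MulAction.orbit _ b ↔ _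
  constructor
  · intro h
    obtain ⟨⟨g, i, rfl⟩, hg⟩ := MulAction.mem_orbit_iff.mp h
    exact Equiv.Perm.SameCycle.symm ⟨i, hg⟩
  · rintro ⟨i, hi⟩
    exact MulAction.mem_orbit_iff.mpr ⟨⟨w ^ (-i), ⟨-i, rfl⟩⟩, by
      show (w ^ (-i) : Perm β) b = a
      simp [← hi]⟩

lemma ncyc_le {β : Type*} [Fintype β] (w : Perm β) : ncyc w ≤ Fintype.card β := by
  rw [← Nat.card_eq_fintype_card]
  exact Nat.card_le_card_of_surjective _ (Quot.mk_surjective)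

lemma sameCycle_of_forall {β : Type*} [Finite β] {ρ τ : Perm β}
    (h : ∀ u, τ.SameCycle u (ρ u)) {y z : β} (hyz : ρ.SameCycle y z) :
    τ.SameCycle y z := by
  have key : ∀ (i : ℕ) (y : β), τ.SameCycle y ((ρ ^ i) y) := by
    intro i
    induction i with
    | zero => intro y; simpa using Equiv.Perm.SameCycle.refl τ y
    | succ i ih =>
        intro y
        rw [pow_succ, Equiv.Perm.mul_apply]
        exact (h y).trans (ih (ρ y))
  obtain ⟨i, _, rfl⟩ := hyz.exists_pow_eq'
  exact key i y

lemma sameCycle_fixed {β : Type*} {ρ : Perm β} {x y : β} (hx : ρ x = x)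
    (h : ρ.SameCycle x y) : y = x := by
  obtain ⟨i, hi⟩ := h
  rw [Equiv.Perm.zpow_apply_eq_self_of_apply_eq_self hx] at hi
  exact hi.symm

open Classical in
lemma ncyc_embed {β γ : Type*} [Fintype β] [Fintype γ] (f : γ → β)
    (hf : Function.Injective f) (σ : Perm β) (τ : Perm γ)
    (hcomm : ∀ y, σ (f y) = f (τ y))
    (hfix : ∀ x, (∀ y, f y ≠ x) → σ x = x) :
    ncyc σ = ncyc τ + Nat.card {x : β // ∀ y, f y ≠ x} := by
  have hpow : ∀ (i : ℕ) (y : γ), (σ ^ i) (f y) = f ((τ ^ i) y) := by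
    intro i
    induction i with
    | zero => intro y; rfl
    | succ i ih =>
        intro y
        rw [pow_succ, Equiv.Perm.mul_apply, pow_succ, Equiv.Perm.mul_apply, hcomm, ih]
  have key : ∀ (y : γ) (b : β), σ.SameCycle (f y) b → ∃ z, b = f z ∧ τ.SameCycle y z := by
    intro y b h
    obtain ⟨i, _, rfl⟩ := h.exists_pow_eq'
    exact ⟨(τ ^ i) y, hpow i y, ⟨(i : ℤ), by rw [zpow_natCast]⟩⟩
  have key3 : ∀ y z : γ, τ.SameCycle y z → σ.SameCycle (f y) (f z) := by
    intro y z h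
    obtain ⟨i, _, rfl⟩ := h.exists_pow_eq'
    exact ⟨(i : ℤ), by rw [zpow_natCast, hpow]⟩
  have key2 : ∀ x : β, (∀ y, f y ≠ x) → ∀ b, σ.SameCycle x b → b = x := by
    intro x hx b h
    exact sameCycle_fixed (hfix x hx) h
  rw [ncyc_eq_card, ncyc_eq_card, ← Nat.card_sum]
  apply Nat.card_congr
  set g : β → Quotient (scSetoid τ) ⊕ {x : β // ∀ y, f y ≠ x} :=
    fun b => if h : ∃ z, f z = b then Sum.inl (Quotient.mk (scSetoid τ) h.choose)
      else Sum.inr ⟨b, fun y hy => h ⟨y, hy⟩⟩ with hg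
  have wd : ∀ (b b' : β), σ.SameCycle b b' → g b = g b' := by
    intro b b' hbb'
    by_cases h : ∃ z, f z = b
    · have hsp := h.choose_spec
      rw [← hsp] at hbb'
      obtain ⟨z', rfl, hzz'⟩ := key h.choose b' hbb'
      have h' : ∃ z, f z = f z' := ⟨z', rfl⟩
      rw [hg]
      simp only [dif_pos h, dif_pos h']
      have : h'.choose = z' := hf h'.choose_spec
      rw [this]
      exact congrArg Sum.inl (Quotient.sound hzz')
    · have hb' : b' = b := key2 b (fun y hy => h ⟨y, hy⟩) b' hbb'
      rw [hb']
  refine Equiv.ofBijective (Quotient.lift g wd) ⟨?_, ?_⟩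
  · intro q q'
    refine Quotient.inductionOn₂ q q' ?_
    intro b b' hbb'
    change g b = g b' at hbb'
    rw [hg] at hbb'
    by_cases h : ∃ z, f z = b <;> by_cases h' : ∃ z, f z = b'
    · simp only [dif_pos h, dif_pos h', Sum.inl.injEq] at hbb'
      have := key3 _ _ (Quotient.exact hbb')
      rw [h.choose_spec, h'.choose_spec] at this
      exact Quotient.sound this
    · simp only [dif_pos h, dif_neg h'] at hbb'
      exact absurd hbb' (by simp)
    · simp only [dif_neg h, dif_pos h'] at hbb'
      exact absurd hbb' (by simp)
    · simp only [dif_neg h, dif_neg h', Sum.inr.injEq, Subtype.mk.injEq] at hbb'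
      rw [hbb']
  · rintro (q | ⟨x, hx⟩)
    · refine Quotient.inductionOn q ?_
      intro z
      refine ⟨Quotient.mk _ (f z), ?_⟩
      have h : ∃ z', f z' = f z := ⟨z, rfl⟩
      simp only [Quotient.lift_mk, hg, dif_pos h]
      rw [hf h.choose_spec]
    · refine ⟨Quotient.mk _ x, ?_⟩
      simp only [Quotient.lift_mk, hg, dif_neg (fun hh : ∃ z, f z = x => hx hh.choose hh.choose_spec)]

lemma ncyc_ofSubtype {β : Type*} [Fintype β] {p : β → Prop} [DecidablePred p]
    (q : Perm (Subtype p)) :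
    ncyc (Equiv.Perm.ofSubtype q) = ncyc q + Fintype.card {x : β // ¬ p x} := by
  classical
  rw [ncyc_embed (fun y : Subtype p => (y : β)) Subtype.val_injective _ q
    (fun y => Equiv.Perm.ofSubtype_apply_coe q y)
    (fun x hx => Equiv.Perm.ofSubtype_apply_of_not_mem q (fun hp => hx ⟨x, hp⟩ rfl))]
  congr 1
  rw [← Nat.card_eq_fintype_card]
  apply Nat.card_congr
  apply Equiv.subtypeEquivRight
  intro x
  constructor
  · intro h hp; exact h ⟨x, hp⟩ rfl
  · intro h y hy; exact h (hy ▸ y.2)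

lemma ncyc_permCongr {β γ : Type*} [Fintype β] [Fintype γ] (e : γ ≃ β) (τ : Perm γ) :
    ncyc (e.permCongr τ) = ncyc τ := by
  have := ncyc_embed (fun y : γ => e y) e.injective (e.permCongr τ) τ
    (fun y => by simp) (fun x hx => absurd (e.apply_symm_apply x) (hx (e.symm x)))
  rw [this]
  have : IsEmpty {x : β // ∀ y, e y ≠ x} :=
    ⟨fun ⟨x, hx⟩ => hx (e.symm x) (e.apply_symm_apply x)⟩
  simp [Nat.card_of_isEmpty]

lemma ncyc_optionCongr {γ : Type*} [Fintype γ] (τ : Perm γ) :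
    ncyc τ.optionCongr = ncyc τ + 1 := by
  classical
  rw [ncyc_embed (fun y : γ => (some y : Option γ)) (Option.some_injective γ) τ.optionCongr τ
    (fun y => by simp) (fun x hx => by
      cases x with
      | none => simp
      | some u => exact absurd rfl (hx u))]
  congr 1
  rw [Nat.card_eq_one_iff_unique]
  refine ⟨⟨fun a b => ?_⟩, ⟨⟨none, fun y => by simp⟩⟩⟩
  obtain ⟨(_ | u), hx⟩ := a
  · obtain ⟨(_ | v), hy⟩ := b
    · rfl
    · exact absurd rfl (hy v)
  · exact absurd rfl (hx u)

open Classical in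
lemma ncyc_mul_swap {β : Type*} [Fintype β] [DecidableEq β] (σ : Perm β) (x : β)
    (hx : σ x ≠ x) :
    ncyc (σ * Equiv.swap x (σ⁻¹ x)) = ncyc σ + 1 := by
  set a := σ⁻¹ x with ha_def
  set σ' := σ * Equiv.swap x a with hσ'
  have ha : σ a = x := Equiv.apply_symm_apply σ x
  have hax : a ≠ x := fun h => hx (h ▸ ha)
  have f1 : σ' x = x := by
    rw [hσ', Equiv.Perm.mul_apply, Equiv.swap_apply_left, ha]
  have hσ'a : σ' a = σ x := by
    rw [hσ', Equiv.Perm.mul_apply, Equiv.swap_apply_right]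
  have hσ'other : ∀ u, u ≠ x → u ≠ a → σ' u = σ u := by
    intro u h1 h2
    rw [hσ', Equiv.Perm.mul_apply, Equiv.swap_apply_of_ne_of_ne h1 h2]
  have f2 : ∀ u, σ.SameCycle u (σ' u) := by
    intro u
    by_cases h1 : u = x
    · rw [h1, f1]
    · by_cases h2 : u = a
      · rw [h2, hσ'a]
        have hh1 : σ.SameCycle a x := ⟨1, by simpa using ha⟩
        have hh2 : σ.SameCycle x (σ x) := ⟨1, by simp⟩
        exact hh1.trans hh2
      · rw [hσ'other u h1 h2]
        exact ⟨1, by simp⟩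
  have b1 : ∀ {y z}, σ'.SameCycle y z → σ.SameCycle y z := fun h => sameCycle_of_forall f2 h
  have b2aux : ∀ i : ℕ, ∀ y, y ≠ x → (σ ^ i) y ≠ x → σ'.SameCycle y ((σ ^ i) y) := by
    intro i
    induction i using Nat.strong_induction_on with
    | _ i ih =>
      match i with
      | 0 => intro y hy _; simpa using Equiv.Perm.SameCycle.refl σ' y
      | (j+1) =>
        intro y hy hz
        have hstep : (σ ^ (j + 1)) y = σ ((σ ^ j) y) := by
          rw [pow_succ', Equiv.Perm.mul_apply]
        by_cases hu : (σ ^ j) y = x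
        · match j, hu with
          | 0, hu => exact absurd hu hy
          | (l+1), hu =>
            have hv : (σ ^ l) y = a := by
              have h1 : σ ((σ ^ l) y) = x := by
                rw [← hu, pow_succ', Equiv.Perm.mul_apply]
              rw [ha_def, ← h1, Equiv.Perm.inv_def, Equiv.symm_apply_apply]
            have h1 : σ'.SameCycle y a := by
              have := ih l (by omega) y hy (by rw [hv]; exact hax)
              rwa [hv] at this
            have h2 : σ' a = (σ ^ (l + 1 + 1)) y := by
              rw [hσ'a, hstep, hu]
            exact h1.trans ⟨1, by simpa using h2⟩
        · have hne_a : (σ ^ j) y ≠ a := by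
            intro h
            apply hz
            rw [hstep, h, ha]
          have h1 := ih j (by omega) y hy hu
          have h2 : σ' ((σ ^ j) y) = (σ ^ (j + 1)) y := by
            rw [hσ'other _ hu hne_a, hstep]
          exact h1.trans ⟨1, by simpa using h2⟩
  have b2 : ∀ y z, y ≠ x → z ≠ x → σ.SameCycle y z → σ'.SameCycle y z := by
    intro y z hy hz h
    obtain ⟨i, _, rfl⟩ := h.exists_pow_eq'
    exact b2aux i y hy hz
  have hclassx : ∀ z, σ'.SameCycle x z → z = x := fun z h => sameCycle_fixed f1 h
  -- now build the equiv
  rw [ncyc_eq_card, ncyc_eq_card]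
  have : Nat.card (Quotient (scSetoid σ')) = Nat.card (Option (Quotient (scSetoid σ))) := by
    apply Nat.card_congr
    set g : β → Option (Quotient (scSetoid σ)) :=
      fun y => if y = x then none else some (Quotient.mk (scSetoid σ) y) with hg
    have wd : ∀ y z, σ'.SameCycle y z → g y = g z := by
      intro y z hyz
      by_cases hy : y = x
      · rw [hy, hclassx z (hy ▸ hyz)]
      · have hz : z ≠ x := fun h => hy (hclassx y ((h ▸ hyz).symm))
        rw [hg]
        simp only [if_neg hy, if_neg hz, Option.some.injEq]
        exact Quotient.sound (b1 hyz)
    refine Equiv.ofBijective (Quotient.lift g wd) ⟨?_, ?_⟩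
    · intro q q'
      refine Quotient.inductionOn₂ q q' ?_
      intro y z h
      simp only [Quotient.lift_mk, hg] at h
      by_cases hy : y = x <;> by_cases hz : z = x
      · rw [hy, hz]
      · rw [if_pos hy, if_neg hz] at h; exact absurd h.symm (by simp)
      · rw [if_neg hy, if_pos hz] at h; exact absurd h (by simp)
      · rw [if_neg hy, if_neg hz, Option.some.injEq] at h
        exact Quotient.sound (b2 y z hy hz (Quotient.exact h))
    · rintro (_ | q)
      · exact ⟨Quotient.mk _ x, by simp [hg]⟩
      · refine Quotient.inductionOn q ?_
        intro y
        by_cases hy : σ.SameCycle x y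
        · refine ⟨Quotient.mk _ (σ x), ?_⟩
          have h1 : σ.SameCycle x (σ x) := ⟨1, by simp⟩
          simp only [Quotient.lift_mk, hg, if_neg hx]
          exact congrArg some (Quotient.sound (h1.symm.trans hy))
        · have hyx : y ≠ x := fun h => hy (h ▸ Equiv.Perm.SameCycle.refl σ x)
          exact ⟨Quotient.mk _ y, by simp [hg, if_neg hyx]⟩
  rw [this, Finite.card_option]

lemma ncyc_one_empty {β : Type*} [Fintype β] (h : Fintype.card β = 0) (w : Perm β) :
    ncyc w = 0 := le_antisymm (h ▸ ncyc_le w) (Nat.zero_le _)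

lemma base_sum : ∀ (l : ℕ) (β : Type) (_ : Fintype β) (_ : DecidableEq β),
    Fintype.card β = l →
    ∑ h : Perm β, (Polynomial.X : Polynomial ℤ) ^ (l - ncyc h)
      = ∏ j ∈ Finset.range l, (1 + (j : Polynomial ℤ) * Polynomial.X) := by
  intro l
  induction l with
  | zero =>
      intro β _ _ hcard
      have : ∀ h : Perm β, (Polynomial.X : Polynomial ℤ) ^ (0 - ncyc h) = 1 := by
        intro h
        rw [ncyc_one_empty hcard]
        rfl
      rw [Finset.sum_congr rfl (fun h _ => this h), Finset.sum_const, Finset.card_univ,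
        Fintype.card_perm, hcard]
      simp
  | succ l ih =>
      intro β _ _ hcard
      classical
      -- transport to Option (Fin l)
      have e : β ≃ Option (Fin l) :=
        (Fintype.equivFinOfCardEq hcard).trans (finSuccEquiv l)
      have htrans : ∑ h : Perm β, (Polynomial.X : Polynomial ℤ) ^ (l + 1 - ncyc h)
          = ∑ h : Perm (Option (Fin l)), (Polynomial.X : Polynomial ℤ) ^ (l + 1 - ncyc h) := by
        refine Fintype.sum_equiv (e.permCongr) _ _ ?_
        intro h
        rw [ncyc_permCongr]
      rw [htrans]
      -- decompose
      rw [← Equiv.sum_comp (Equiv.Perm.decomposeOption.symm :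
            Option (Fin l) × Perm (Fin l) ≃ Perm (Option (Fin l)))
          (fun π => (Polynomial.X : Polynomial ℤ) ^ (l + 1 - ncyc π)),
        Fintype.sum_prod_type, Fintype.sum_option]
      have hnone : ∀ h : Perm (Fin l),
          ncyc (Equiv.Perm.decomposeOption.symm ((none : Option (Fin l)), h)) = ncyc h + 1 := by
        intro h
        simp only [Equiv.Perm.decomposeOption_symm_apply]
        rw [Equiv.swap_self]
        rw [show (Equiv.refl (Option (Fin l))) * h.optionCongr = h.optionCongr by
          ext z; simp]
        exact ncyc_optionCongr h
      have hsome : ∀ (u : Fin l) (h : Perm (Fin l)),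
          ncyc (Equiv.Perm.decomposeOption.symm (some u, h)) = ncyc h := by
        intro u h
        simp only [Equiv.Perm.decomposeOption_symm_apply]
        set s := Equiv.swap (none : Option (Fin l)) (some u) * h.optionCongr with hs
        have hsnone : s none ≠ none := by
          simp [hs]
        have hE : s * Equiv.swap none (s⁻¹ none) = h.optionCongr := by
          have hsinv : s⁻¹ none = some (h⁻¹ u) := by
            rw [hs, mul_inv_rev, Equiv.Perm.mul_apply, Equiv.swap_inv, Equiv.swap_apply_left,
              Equiv.Perm.inv_def]
            exact rfl
          rw [hsinv, hs]
          have hcong : h.optionCongr * Equiv.swap (none : Option (Fin l)) (some (h⁻¹ u))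
              = Equiv.swap (none : Option (Fin l)) (some u) * h.optionCongr := by
            have := Equiv.swap_apply_apply h.optionCongr (none : Option (Fin l)) (some (h⁻¹ u))
            have hhu : h (h⁻¹ u) = u := Equiv.apply_symm_apply h u
            simp only [Equiv.optionCongr_apply, Option.map_none, Option.map_some,
              hhu] at this
            rw [this]
            group
          rw [mul_assoc, hcong, ← mul_assoc, Equiv.swap_mul_self, one_mul]
        have := ncyc_mul_swap s none hsnone
        rw [hE, ncyc_optionCongr] at this
        omega
      have hS := ih (Fin l) inferInstance inferInstance (Fintype.card_fin l)
      have h1 : ∑ h : Perm (Fin l), (Polynomial.X : Polynomial ℤ) ^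
            (l + 1 - ncyc (Equiv.Perm.decomposeOption.symm ((none : Option (Fin l)), h)))
          = ∑ h : Perm (Fin l), (Polynomial.X : Polynomial ℤ) ^ (l - ncyc h) := by
        refine Finset.sum_congr rfl fun h _ => ?_
        rw [hnone, Nat.succ_sub_succ]
      have h2 : ∀ u : Fin l, ∑ h : Perm (Fin l), (Polynomial.X : Polynomial ℤ) ^
            (l + 1 - ncyc (Equiv.Perm.decomposeOption.symm (some u, h)))
          = (∑ h : Perm (Fin l), (Polynomial.X : Polynomial ℤ) ^ (l - ncyc h)) * Polynomial.X := by
        intro u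
        rw [Finset.sum_mul]
        refine Finset.sum_congr rfl fun h _ => ?_
        rw [hsome]
        have hle : ncyc h ≤ l := le_trans (ncyc_le h) (le_of_eq (Fintype.card_fin l))
        rw [show l + 1 - ncyc h = (l - ncyc h) + 1 by omega, pow_succ]
      rw [h1, Finset.sum_congr rfl (fun u _ => h2 u), Finset.sum_const, Finset.card_univ,
        Fintype.card_fin, hS, Finset.prod_range_succ, nsmul_eq_mul]
      push_cast
      ring

open Classical in
lemma core_dvd (n k : ℕ) (hkn : k + 1 ≤ n) (B : Finset (Fin n)) (hB : B.card = k + 1) :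
    ∀ w : Equiv.Perm (Fin n),
      (∏ j ∈ Finset.range (k + 1), (1 + (j : Polynomial ℤ) * Polynomial.X)) ∣
        ∑ h : Equiv.Perm {i : Fin n // i ∈ B},
          (Polynomial.X : Polynomial ℤ) ^ (n - ncyc (w * Equiv.Perm.ofSubtype h)) := by
  suffices H : ∀ (D : ℕ) (w : Equiv.Perm (Fin n)),
      (Finset.univ.filter (fun x : Fin n => x ∉ B ∧ w x ≠ x)).card = D →
      (∏ j ∈ Finset.range (k + 1), (1 + (j : Polynomial ℤ) * Polynomial.X)) ∣
        ∑ h : Equiv.Perm {i : Fin n // i ∈ B},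
          (Polynomial.X : Polynomial ℤ) ^ (n - ncyc (w * Equiv.Perm.ofSubtype h)) by
    intro w; exact H _ w rfl
  intro D
  induction D using Nat.strong_induction_on with
  | _ D ih =>
    intro w hD
    by_cases hfix : ∀ x : Fin n, x ∉ B → w x = x
    · -- base case : w is a permutation of B
      have h₁ : ∀ x : Fin n, x ∈ B ↔ w x ∈ B := by
        intro x
        constructor
        · intro hx
          by_contra hwxB
          have h2 : w (w x) = w x := hfix _ hwxB
          have h3 : w x = x := w.injective h2
          exact hwxB (by rwa [h3])
        · intro hwxB
          by_contra hx
          exact hx (by rwa [hfix x hx] at hwxB)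
      set w₀ : Perm {i : Fin n // i ∈ B} := w.subtypePerm (fun x => (h₁ x).symm) with hw₀
      have hw : Equiv.Perm.ofSubtype w₀ = w :=
        Equiv.Perm.ofSubtype_subtypePerm (fun x => (h₁ x).symm) (fun x hx => by
          by_contra hxB
          exact hx (hfix x hxB))
      have hsum : ∑ h : Equiv.Perm {i : Fin n // i ∈ B},
            (Polynomial.X : Polynomial ℤ) ^ (n - ncyc (w * Equiv.Perm.ofSubtype h))
          = ∑ h : Equiv.Perm {i : Fin n // i ∈ B},
            (Polynomial.X : Polynomial ℤ) ^ (n - ncyc (Equiv.Perm.ofSubtype h)) := by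
        rw [← Equiv.sum_comp (Equiv.mulLeft w₀)
          (fun h => (Polynomial.X : Polynomial ℤ) ^ (n - ncyc (Equiv.Perm.ofSubtype h)))]
        refine Finset.sum_congr rfl fun h _ => ?_
        rw [Equiv.coe_mulLeft, map_mul, hw]
      rw [hsum]
      have hcompl : Fintype.card {x : Fin n // ¬ x ∈ B} = n - (k + 1) := by
        rw [Fintype.card_subtype_compl, Fintype.card_fin, Fintype.card_coe, hB]
      have hcard : Fintype.card {i : Fin n // i ∈ B} = k + 1 := by
        rw [Fintype.card_coe, hB]
      have hexp : ∀ h : Equiv.Perm {i : Fin n // i ∈ B},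
          n - ncyc (Equiv.Perm.ofSubtype h) = (k + 1) - ncyc h := by
        intro h
        rw [ncyc_ofSubtype, hcompl]
        have := le_trans (ncyc_le h) (le_of_eq hcard)
        omega
      rw [Finset.sum_congr rfl (fun h _ => by rw [hexp h])]
      rw [base_sum (k + 1) {i : Fin n // i ∈ B} _ _ hcard]
    · push_neg at hfix
      obtain ⟨x, hxB, hwx⟩ := hfix
      set a := w⁻¹ x with ha_def
      set w' := w * Equiv.swap x a with hw'
      have hwa : w a = x := Equiv.apply_symm_apply w x
      -- (i) conjugation identity
      have hkey : ∀ h : Equiv.Perm {i : Fin n // i ∈ B},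
          ncyc (w * Equiv.Perm.ofSubtype h) + 1 = ncyc (w' * Equiv.Perm.ofSubtype h) := by
        intro h
        set g := Equiv.Perm.ofSubtype h with hg
        have hgx : g x = x := Equiv.Perm.ofSubtype_apply_of_not_mem h hxB
        have hσx : (w * g) x ≠ x := by
          rw [Equiv.Perm.mul_apply, hgx]; exact hwx
        have hswap : g * Equiv.swap x (g⁻¹ a) = Equiv.swap x a * g := by
          have := Equiv.swap_apply_apply g x (g⁻¹ a)
          have hga : g (g⁻¹ a) = a := Equiv.apply_symm_apply g a
          rw [hga, hgx] at this
          rw [this]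
          group
        have hE : w' * g = (w * g) * Equiv.swap x ((w * g)⁻¹ x) := by
          have hinv : (w * g)⁻¹ x = g⁻¹ a := by
            rw [mul_inv_rev, Equiv.Perm.mul_apply, ← ha_def]
          rw [hinv, mul_assoc, ← hswap, ← mul_assoc]
        rw [hE, ncyc_mul_swap (w * g) x hσx]
      -- (iii) the filter decreases
      have hw'x : w' x = x := by
        rw [hw', Equiv.Perm.mul_apply, Equiv.swap_apply_left, hwa]
      have hsub : (Finset.univ.filter (fun y : Fin n => y ∉ B ∧ w' y ≠ y)) ⊂
          (Finset.univ.filter (fun y : Fin n => y ∉ B ∧ w y ≠ y)) := by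
        constructor
        · intro y hy
          simp only [Finset.mem_filter, Finset.mem_univ, true_and] at hy ⊢
          obtain ⟨hyB, hwy⟩ := hy
          refine ⟨hyB, ?_⟩
          by_cases hy1 : y = x
          · exact absurd (hy1 ▸ hw'x) (hy1 ▸ hwy)
          · by_cases hy2 : y = a
            · rw [hy2, hwa]; rw [hy2] at hy1; exact fun hh => hy1 hh.symm
            · intro hh
              apply hwy
              rw [hw', Equiv.Perm.mul_apply, Equiv.swap_apply_of_ne_of_ne hy1 hy2, hh]
        · intro hsub'
          have hxmem : x ∈ Finset.univ.filter (fun y : Fin n => y ∉ B ∧ w y ≠ y) := by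
            simp [hxB, hwx]
          have := hsub' hxmem
          simp only [Finset.mem_filter, Finset.mem_univ, true_and] at this
          exact this.2 hw'x
      have hlt : (Finset.univ.filter (fun y : Fin n => y ∉ B ∧ w' y ≠ y)).card < D :=
        hD ▸ Finset.card_lt_card hsub
      have hdvd := ih _ hlt w' rfl
      have hexp : ∀ h : Equiv.Perm {i : Fin n // i ∈ B},
          (Polynomial.X : Polynomial ℤ) ^ (n - ncyc (w * Equiv.Perm.ofSubtype h))
          = (Polynomial.X : Polynomial ℤ) ^ (n - ncyc (w' * Equiv.Perm.ofSubtype h)) *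
            Polynomial.X := by
        intro h
        have h1 := hkey h
        have h2 : ncyc (w' * Equiv.Perm.ofSubtype h) ≤ n :=
          le_trans (ncyc_le _) (le_of_eq (Fintype.card_fin n))
        rw [show n - ncyc (w * Equiv.Perm.ofSubtype h)
            = (n - ncyc (w' * Equiv.Perm.ofSubtype h)) + 1 by omega, pow_succ]
      rw [Finset.sum_congr rfl (fun h _ => hexp h), ← Finset.sum_mul]
      exact Dvd.dvd.mul_right hdvd _


/-- In `ℤ[α][x_{u,v}]`, if `1 ≤ k < n` and the column-index sequence `c` has `k+1`
consecutive entries equal to `1` (0-indexed: `c_{m} = ⋯ = c_{m+k} = 0`), then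
`∑_{w ∈ S_n} α^{n−ν(w)} ∏_{p=1}^n x_{w(p),c_p}` is divisible by `(1+α)(1+2α)⋯(1+kα)`. -/
theorem stmt7 (n k m : ℕ) (hk1 : 1 ≤ k) (hkn : k < n)
    (c : Fin n → Fin n) (hm : m + k + 1 ≤ n)
    (hc : ∀ t : ℕ, ∀ ht : t ≤ k, c ⟨m + t, by omega⟩ = ⟨0, by omega⟩) :
    (MvPolynomial.C (∏ j ∈ Finset.Icc 1 k, (1 + (j : Polynomial ℤ) * Polynomial.X)) :
        MvPolynomial (Fin n × Fin n) (Polynomial ℤ)) ∣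
    ∑ w : Equiv.Perm (Fin n),
      MvPolynomial.C ((Polynomial.X : Polynomial ℤ) ^ (n - permCycles w)) *
        ∏ p : Fin n, MvPolynomial.X (w p, c p) := by

  classical
  have h0n : 0 < n := by omega
  -- the block of positions
  set f0 : Fin (k + 1) → Fin n := fun t => ⟨m + t.val, by omega⟩ with hf0
  have hf0inj : Function.Injective f0 := by
    intro s t hst
    have := congrArg Fin.val hst
    simp only [hf0] at this
    exact Fin.ext (by omega)
  set B : Finset (Fin n) := Finset.image f0 Finset.univ with hBdef
  have hB : B.card = k + 1 := by
    rw [hBdef, Finset.card_image_of_injective _ hf0inj, Finset.card_univ, Fintype.card_fin]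
  have hcB : ∀ i ∈ B, c i = ⟨0, h0n⟩ := by
    intro i hi
    rw [hBdef] at hi
    obtain ⟨t, -, rfl⟩ := Finset.mem_image.mp hi
    have ht : (t : ℕ) ≤ k := by omega
    exact hc t ht
  -- the subgroup of permutations of the block
  have hφinj : Function.Injective
      (Equiv.Perm.ofSubtype : Equiv.Perm {i : Fin n // i ∈ B} →* Equiv.Perm (Fin n)) := by
    intro h h' hhh
    ext y
    have := congrFun (congrArg (fun (e : Equiv.Perm (Fin n)) => (e : Fin n → Fin n)) hhh) y.val
    simp only [Equiv.Perm.ofSubtype_apply_coe] at this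
    rw [this]
  set H : Subgroup (Equiv.Perm (Fin n)) :=
    (Equiv.Perm.ofSubtype : Equiv.Perm {i : Fin n // i ∈ B} →* Equiv.Perm (Fin n)).range with hH
  set rep : Equiv.Perm (Fin n) → Equiv.Perm (Fin n) :=
    fun g => Quotient.out (QuotientGroup.mk (s := H) g : Equiv.Perm (Fin n) ⧸ H) with hrep
  have hrep1 : ∀ g, (rep g)⁻¹ * g ∈ H := by
    intro g
    exact QuotientGroup.eq.mp (QuotientGroup.out_eq' (QuotientGroup.mk (s := H) g))
  have hrep2 : ∀ g g', g⁻¹ * g' ∈ H → rep g = rep g' := by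
    intro g g' hgg'
    rw [hrep]
    exact congrArg Quotient.out (QuotientGroup.eq.mpr hgg')
  have hrep3 : ∀ g, rep (rep g) = rep g := fun g => hrep2 _ _ (hrep1 g)
  set F : Equiv.Perm (Fin n) → MvPolynomial (Fin n × Fin n) (Polynomial ℤ) :=
    fun w => MvPolynomial.C ((Polynomial.X : Polynomial ℤ) ^ (n - permCycles w)) *
        ∏ p : Fin n, MvPolynomial.X (w p, c p) with hF
  suffices hsuff : (MvPolynomial.C (∏ j ∈ Finset.Icc 1 k,
      (1 + (j : Polynomial ℤ) * Polynomial.X)) :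
        MvPolynomial (Fin n × Fin n) (Polynomial ℤ)) ∣ ∑ w : Equiv.Perm (Fin n), F w by
    exact hsuff
  have hsplit : (∑ r ∈ Finset.univ.image rep,
      ∑ g ∈ Finset.univ.filter (fun g => rep g = r), F g) = ∑ w : Equiv.Perm (Fin n), F w := by
    rw [Finset.sum_fiberwise_eq_sum_filter Finset.univ (Finset.univ.image rep) rep F]
    congr 1
    apply Finset.filter_true_of_mem
    intro g _
    exact Finset.mem_image_of_mem rep (Finset.mem_univ g)
  rw [← hsplit]
  apply Finset.dvd_sum
  intro r hr
  have hrr : rep r = r := by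
    obtain ⟨g, -, rfl⟩ := Finset.mem_image.mp hr
    exact hrep3 g
  have hfiber : ∑ g ∈ Finset.univ.filter (fun g => rep g = r), F g
      = ∑ h : Equiv.Perm {i : Fin n // i ∈ B}, F (r * Equiv.Perm.ofSubtype h) := by
    refine (Finset.sum_bij (fun h _ => r * Equiv.Perm.ofSubtype h) ?_ ?_ ?_ ?_).symm
    · intro h _
      simp only [Finset.mem_filter, Finset.mem_univ, true_and]
      rw [hrep2 (r * Equiv.Perm.ofSubtype h) r (by
        simp only [mul_inv_rev, mul_assoc, inv_mul_cancel, mul_one]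
        exact H.inv_mem ⟨h, rfl⟩), hrr]
    · intro h _ h' _ hhh
      exact hφinj (mul_left_cancel hhh)
    · intro g hg
      simp only [Finset.mem_filter, Finset.mem_univ, true_and] at hg
      have : r⁻¹ * g ∈ H := by rw [← hg]; exact hrep1 g
      obtain ⟨h, hh⟩ := this
      exact ⟨h, Finset.mem_univ h, by
        show r * Equiv.Perm.ofSubtype h = g
        rw [hh, mul_inv_cancel_left]⟩
    · intro h _
      rfl
  rw [hfiber]
  -- the product part is constant on the coset
  have hprodinv : ∀ h : Equiv.Perm {i : Fin n // i ∈ B},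
      (∏ p : Fin n, MvPolynomial.X ((r * Equiv.Perm.ofSubtype h) p, c p) :
        MvPolynomial (Fin n × Fin n) (Polynomial ℤ))
      = ∏ p : Fin n, MvPolynomial.X (r p, c p) := by
    intro h
    have hcc : ∀ p : Fin n, c (Equiv.Perm.ofSubtype h p) = c p := by
      intro p
      by_cases hp : p ∈ B
      · have h1 : Equiv.Perm.ofSubtype h p = ((h ⟨p, hp⟩ : {i : Fin n // i ∈ B}) : Fin n) :=
          Equiv.Perm.ofSubtype_apply_of_mem h hp
        rw [h1, hcB _ (h ⟨p, hp⟩).2, hcB _ hp]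
      · rw [Equiv.Perm.ofSubtype_apply_of_not_mem h hp]
    calc (∏ p : Fin n, MvPolynomial.X ((r * Equiv.Perm.ofSubtype h) p, c p) :
          MvPolynomial (Fin n × Fin n) (Polynomial ℤ))
        = ∏ p : Fin n, MvPolynomial.X (r ((Equiv.Perm.ofSubtype h) p), c ((Equiv.Perm.ofSubtype h) p)) := by
          refine Finset.prod_congr rfl fun p _ => ?_
          rw [Equiv.Perm.mul_apply, hcc]
      _ = ∏ p : Fin n, MvPolynomial.X (r p, c p) :=
          Equiv.prod_comp (Equiv.Perm.ofSubtype h : Equiv.Perm (Fin n))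
            (fun p => MvPolynomial.X (r p, c p))
  have hsum2 : ∑ h : Equiv.Perm {i : Fin n // i ∈ B}, F (r * Equiv.Perm.ofSubtype h)
      = MvPolynomial.C (∑ h : Equiv.Perm {i : Fin n // i ∈ B},
          (Polynomial.X : Polynomial ℤ) ^ (n - permCycles (r * Equiv.Perm.ofSubtype h))) *
        ∏ p : Fin n, MvPolynomial.X (r p, c p) := by
    rw [map_sum, Finset.sum_mul]
    refine Finset.sum_congr rfl fun h _ => ?_
    simp only [hF]
    rw [hprodinv h]
  rw [hsum2]
  have hdvd := core_dvd n k (by omega) B hB r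
  have hprodeq : (∏ j ∈ Finset.Icc 1 k, (1 + (j : Polynomial ℤ) * Polynomial.X))
      = ∏ j ∈ Finset.range (k + 1), (1 + (j : Polynomial ℤ) * Polynomial.X) := by
    have hins : Finset.range (k + 1) = insert 0 (Finset.Icc 1 k) := by
      ext j
      simp only [Finset.mem_range, Finset.mem_insert, Finset.mem_Icc]
      omega
    rw [hins, Finset.prod_insert (by simp)]
    simp
  rw [hprodeq]
  exact Dvd.dvd.mul_right (map_dvd MvPolynomial.C hdvd) _
end
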